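/- Let K be an arbitrary field and n ≥ 1. In the flip graph of the polynomial multiplication tensor T_{n,1} there is a path (consisting of flips and reductions) that leads from the standard representation {(a_i, b_j, c_{i+j}) : 0 ≤ i ≤ n, 0 ≤ j ≤ 1} to a representation of length ⌈(3/2)(n+1)⌉. -/
import Mathlib


open Polynomial TensorProduct

namespace FlipGraph

variable (K : Type) [Field K]

/-- A triple `(u, v, w)` of polynomials, standing for the rank-one tensor `u ⊗ v ⊗ w`. -/
abbrev Triple := Polynomial K × Polynomial K × Polynomial K

/-- The rank-one tensor `u ⊗ v ⊗ w` represented by a triple. -/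
noncomputable def tensorOf (t : Triple K) :
    TensorProduct K (Polynomial K) (TensorProduct K (Polynomial K) (Polynomial K)) :=
  t.1 ⊗ₜ[K] (t.2.1 ⊗ₜ[K] t.2.2)

/-- The tensor represented by a representation (a multiset of triples). -/
noncomputable def tensorOfRep (S : Multiset (Triple K)) :
    TensorProduct K (Polynomial K) (TensorProduct K (Polynomial K) (Polynomial K)) :=
  (S.map (tensorOf K)).sum

/-- Two representations are equivalent up to rescaling: each triple is replaced by another
triple representing the same rank-one tensor (nonzero scalar factors being moved between the
three components). Such rescalings are not counted as steps. -/
def ReEq (S S' : Multiset (Triple K)) : Prop :=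
  S.map (tensorOf K) = S'.map (tensorOf K)

/-- A flip replaces two triples that agree in one position by two new triples: for a shared
first component and any `l ∈ K`, `(u, v₁, w₁), (u, v₂, w₂) ↦ (u, v₁ − l·v₂, w₁),
(u, v₂, w₂ + l·w₁)`, and analogously when the shared component is the second or the third. -/
def IsFlip (S S' : Multiset (Triple K)) : Prop :=
  ∃ (T : Multiset (Triple K)) (l : K),
    (∃ u v₁ w₁ v₂ w₂, S = (u, v₁, w₁) ::ₘ (u, v₂, w₂) ::ₘ T ∧
        S' = (u, v₁ - l • v₂, w₁) ::ₘ (u, v₂, w₂ + l • w₁) ::ₘ T) ∨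
    (∃ v u₁ w₁ u₂ w₂, S = (u₁, v, w₁) ::ₘ (u₂, v, w₂) ::ₘ T ∧
        S' = (u₁ - l • u₂, v, w₁) ::ₘ (u₂, v, w₂ + l • w₁) ::ₘ T) ∨
    (∃ w u₁ v₁ u₂ v₂, S = (u₁, v₁, w) ::ₘ (u₂, v₂, w) ::ₘ T ∧
        S' = (u₁ - l • u₂, v₁, w) ::ₘ (u₂, v₂ + l • v₁, w) ::ₘ T)

/-- A reduction replaces two triples that agree in two positions by their sum in the remaining
position, e.g. `(u₁, v, w), (u₂, v, w) ↦ (u₁ + u₂, v, w)`. -/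
def IsReduction (S S' : Multiset (Triple K)) : Prop :=
  ∃ T : Multiset (Triple K),
    (∃ u₁ u₂ v w, S = (u₁, v, w) ::ₘ (u₂, v, w) ::ₘ T ∧ S' = (u₁ + u₂, v, w) ::ₘ T) ∨
    (∃ u v₁ v₂ w, S = (u, v₁, w) ::ₘ (u, v₂, w) ::ₘ T ∧ S' = (u, v₁ + v₂, w) ::ₘ T) ∨
    (∃ u v w₁ w₂, S = (u, v, w₁) ::ₘ (u, v, w₂) ::ₘ T ∧ S' = (u, v, w₁ + w₂) ::ₘ T)

/-- `Path K S S' f r` means that in the flip graph there is a path from representation `S` to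
representation `S'` consisting of `f` flips and `r` reductions (interleaved with arbitrarily
many uncounted rescalings). -/
inductive Path : Multiset (Triple K) → Multiset (Triple K) → ℕ → ℕ → Prop
  | refl (S : Multiset (Triple K)) : Path S S 0 0
  | rescale {S S' T : Multiset (Triple K)} {f r : ℕ} :
      ReEq K S S' → Path S' T f r → Path S T f r
  | flip {S S' T : Multiset (Triple K)} {f r : ℕ} :
      IsFlip K S S' → Path S' T f r → Path S T (f + 1) r
  | reduce {S S' T : Multiset (Triple K)} {f r : ℕ} :
      IsReduction K S S' → Path S' T f r → Path S T f (r + 1)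

/-- The standard representation of the polynomial multiplication tensor `T_{n,m}`:
the multiset of triples `(a_i, b_j, c_{i+j})` for `0 ≤ i ≤ n`, `0 ≤ j ≤ m`. -/
noncomputable def stdRep (n m : ℕ) : Multiset (Triple K) :=
  (Finset.range (n + 1) ×ˢ Finset.range (m + 1)).val.map
    fun p => ((X : Polynomial K) ^ p.1, (X : Polynomial K) ^ p.2,
              (X : Polynomial K) ^ (p.1 + p.2))

end FlipGraph

open FlipGraph


namespace FlipGraph

variable (K : Type) [Field K]

lemma my_rot3 {α : Type*} (a b c : α) (s : Multiset α) :
    a ::ₘ b ::ₘ c ::ₘ s = b ::ₘ c ::ₘ a ::ₘ s := by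
  rw [Multiset.cons_swap a b, Multiset.cons_swap a c]

lemma my_rot3' {α : Type*} (a b c : α) (s : Multiset α) :
    a ::ₘ b ::ₘ c ::ₘ s = c ::ₘ a ::ₘ b ::ₘ s := by
  rw [Multiset.cons_swap b c, Multiset.cons_swap a c]

lemma my_swap24 {α : Type*} (a b c d : α) (s : Multiset α) :
    a ::ₘ b ::ₘ c ::ₘ d ::ₘ s = a ::ₘ d ::ₘ c ::ₘ b ::ₘ s := by
  rw [Multiset.cons_swap b c, Multiset.cons_swap b d, Multiset.cons_swap c d]

lemma my_perm4 {α : Type*} (a b c d : α) (s : Multiset α) :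
    a ::ₘ b ::ₘ c ::ₘ d ::ₘ s = c ::ₘ d ::ₘ a ::ₘ b ::ₘ s := by
  rw [Multiset.cons_swap b c, Multiset.cons_swap a c, Multiset.cons_swap b d,
    Multiset.cons_swap a d]

lemma Path.trans {S T U : Multiset (Triple K)} {f r f' r' : ℕ}
    (h1 : Path K S T f r) (h2 : Path K T U f' r') : Path K S U (f + f') (r + r') := by
  induction h1 with
  | refl S => simpa using h2
  | rescale h _ ih => exact Path.rescale h (ih h2)
  | flip h _ ih => exact Nat.succ_add .. ▸ Path.flip h (ih h2)
  | reduce h _ ih => exact Nat.succ_add .. ▸ Path.reduce h (ih h2)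

lemma IsFlip.add {S S' : Multiset (Triple K)} (T : Multiset (Triple K))
    (h : IsFlip K S S') : IsFlip K (S + T) (S' + T) := by
  obtain ⟨T0, l, h⟩ := h
  refine ⟨T0 + T, l, ?_⟩
  rcases h with ⟨u,v1,w1,v2,w2,h1,h2⟩ | ⟨v,u1,w1,u2,w2,h1,h2⟩ | ⟨w,u1,v1,u2,v2,h1,h2⟩
  · exact Or.inl ⟨u,v1,w1,v2,w2, by simp [h1, Multiset.cons_add],
      by simp [h2, Multiset.cons_add]⟩
  · exact Or.inr (Or.inl ⟨v,u1,w1,u2,w2, by simp [h1, Multiset.cons_add],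
      by simp [h2, Multiset.cons_add]⟩)
  · exact Or.inr (Or.inr ⟨w,u1,v1,u2,v2, by simp [h1, Multiset.cons_add],
      by simp [h2, Multiset.cons_add]⟩)

lemma IsReduction.add {S S' : Multiset (Triple K)} (T : Multiset (Triple K))
    (h : IsReduction K S S') : IsReduction K (S + T) (S' + T) := by
  obtain ⟨T0, h⟩ := h
  refine ⟨T0 + T, ?_⟩
  rcases h with ⟨a,b,c,d,h1,h2⟩ | ⟨a,b,c,d,h1,h2⟩ | ⟨a,b,c,d,h1,h2⟩
  · exact Or.inl ⟨a,b,c,d, by simp [h1, Multiset.cons_add], by simp [h2, Multiset.cons_add]⟩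
  · exact Or.inr (Or.inl ⟨a,b,c,d, by simp [h1, Multiset.cons_add],
      by simp [h2, Multiset.cons_add]⟩)
  · exact Or.inr (Or.inr ⟨a,b,c,d, by simp [h1, Multiset.cons_add],
      by simp [h2, Multiset.cons_add]⟩)

lemma Path.addRight {S S' : Multiset (Triple K)} {f r : ℕ} (T : Multiset (Triple K))
    (h : Path K S S' f r) : Path K (S + T) (S' + T) f r := by
  induction h with
  | refl S => exact Path.refl _
  | rescale h _ ih =>
      refine Path.rescale ?_ ih
      have h2 := congrArg (· + Multiset.map (tensorOf K) T) h
      simpa [ReEq, Multiset.map_add] using h2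
  | flip h _ ih => exact Path.flip (h.add K T) ih
  | reduce h _ ih => exact Path.reduce (h.add K T) ih

lemma block (a0 a1 b0 b1 c0 c1 c2 : Polynomial K) (T : Multiset (Triple K)) :
    Path K ((a1,b0,c1) ::ₘ (a1,b1,c2) ::ₘ (a0,b0,c0) ::ₘ (a0,b1,c1) ::ₘ T)
      ((a0+a1, b1+b0, c1) ::ₘ (a1, b1, c2 + (-1:K)•c1) ::ₘ (a0, b0, c0 + (-1:K)•c1) ::ₘ T)
      3 1 := by
  set A' : Triple K := (a1 - (-1:K)•a0, b0, c1) with hA'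
  set C'' : Triple K := (a0, b0, c0 + (-1:K)•c1) with hC''
  set D' : Triple K := (a1, b1, c2 + (-1:K)•c1) with hD'
  have h1 : IsFlip K ((a1,b0,c1) ::ₘ (a1,b1,c2) ::ₘ (a0,b0,c0) ::ₘ (a0,b1,c1) ::ₘ T)
      (A' ::ₘ (a0, b1 + (-1:K)•b0, c1) ::ₘ (a0,b0,c0) ::ₘ (a1,b1,c2) ::ₘ T) :=
    ⟨(a0,b0,c0) ::ₘ (a1,b1,c2) ::ₘ T, -1, Or.inr (Or.inr
      ⟨c1, a1, b0, a0, b1, my_swap24 (a1,b0,c1) (a1,b1,c2) (a0,b0,c0) (a0,b1,c1) T, rfl⟩)⟩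
  have h2 : IsFlip K (A' ::ₘ (a0, b1 + (-1:K)•b0, c1) ::ₘ (a0,b0,c0) ::ₘ (a1,b1,c2) ::ₘ T)
      ((a0, (b1 + (-1:K)•b0) - (-1:K)•b0, c1) ::ₘ C'' ::ₘ A' ::ₘ (a1,b1,c2) ::ₘ T) :=
    ⟨A' ::ₘ (a1,b1,c2) ::ₘ T, -1, Or.inl
      ⟨a0, b1 + (-1:K)•b0, c1, b0, c0,
        my_rot3 A' (a0, b1 + (-1:K)•b0, c1) (a0,b0,c0) ((a1,b1,c2) ::ₘ T), rfl⟩⟩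
  have h3 : IsFlip K ((a0, (b1 + (-1:K)•b0) - (-1:K)•b0, c1) ::ₘ C'' ::ₘ A' ::ₘ (a1,b1,c2) ::ₘ T)
      ((a0 - (-1:K)•a1, b1, c1) ::ₘ D' ::ₘ C'' ::ₘ A' ::ₘ T) := by
    refine ⟨C'' ::ₘ A' ::ₘ T, -1, Or.inr (Or.inl ⟨b1, a0, c1, a1, c2, ?_, rfl⟩)⟩
    have eb : (b1 + (-1:K)•b0) - (-1:K)•b0 = b1 := by module
    rw [eb, my_rot3' C'' A' (a1,b1,c2) T]
  have h4 : IsReduction K ((a0 - (-1:K)•a1, b1, c1) ::ₘ D' ::ₘ C'' ::ₘ A' ::ₘ T)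
      ((a0+a1, b1+b0, c1) ::ₘ D' ::ₘ C'' ::ₘ T) := by
    refine ⟨D' ::ₘ C'' ::ₘ T, Or.inr (Or.inl ⟨a0+a1, b1, b0, c1, ?_, rfl⟩)⟩
    have e1 : a0 - (-1:K)•a1 = a0 + a1 := by module
    have e2 : a1 - (-1:K)•a0 = a0 + a1 := by module
    rw [e1, hA', e2, my_rot3' D' C'' (a0+a1,b0,c1) T]
  exact Path.flip h1 (Path.flip h2 (Path.flip h3 (Path.reduce h4 (Path.refl _))))

lemma stdRep_succ (m : ℕ) : stdRep K (m+1) 1 =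
    (X^(m+1), X^0, X^(m+1)) ::ₘ (X^(m+1), X^1, X^(m+2)) ::ₘ stdRep K m 1 := by
  have h : ((Finset.range (m+1+1) ×ˢ Finset.range (1+1)).val : Multiset (ℕ × ℕ)) =
      (m+1, 0) ::ₘ (m+1, 1) ::ₘ (Finset.range (m+1) ×ˢ Finset.range (1+1)).val := by
    rw [Finset.range_add_one, Finset.product_val, Finset.product_val,
      Finset.insert_val_of_notMem (by simp), Multiset.cons_product]
    simp [Finset.range, Multiset.range_succ]
    rw [Multiset.cons_swap ((m+1,1) : ℕ×ℕ) ((m+1,0) : ℕ×ℕ), my_perm4]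
  unfold stdRep
  rw [h]
  simp

lemma stdRep_zero : stdRep K 0 1 = (X^0, X^0, X^0) ::ₘ (X^0, X^1, X^1) ::ₘ 0 := by
  have h : ((Finset.range 1 ×ˢ Finset.range (1+1)).val : Multiset (ℕ × ℕ)) =
      (0, 0) ::ₘ (0, 1) ::ₘ 0 := rfl
  unfold stdRep
  rw [h]
  simp

lemma aux : ∀ n : ℕ, ∃ (R : Multiset (Triple K)) (f r : ℕ),
    Path K (stdRep K n 1) R f r ∧ Multiset.card R = (3 * (n + 1) + 1) / 2
  | 0 => ⟨stdRep K 0 1, 0, 0, Path.refl _, by rw [stdRep_zero]; rfl⟩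
  | 1 => by
    have hsplit : stdRep K 1 1 =
        ((X:Polynomial K)^1, (X:Polynomial K)^0, (X:Polynomial K)^1) ::ₘ
        ((X:Polynomial K)^1, (X:Polynomial K)^1, (X:Polynomial K)^2) ::ₘ
        ((X:Polynomial K)^0, (X:Polynomial K)^0, (X:Polynomial K)^0) ::ₘ
        ((X:Polynomial K)^0, (X:Polynomial K)^1, (X:Polynomial K)^1) ::ₘ 0 := by
      rw [stdRep_succ, stdRep_zero]
    have hp := block K (X^0) (X^1) (X^0) (X^1) (X^0) (X^1) (X^2) 0
    rw [← hsplit] at hp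
    exact ⟨_, 3, 1, hp, rfl⟩
  | (n+2) => by
    obtain ⟨R, f, r, hp, hc⟩ := aux n
    have e1 : (X : Polynomial K)^(n+1+1) = X^(n+2) := by norm_num
    have e2 : (X : Polynomial K)^(n+1+2) = X^(n+3) := by norm_num
    have hsplit : stdRep K (n+2) 1 =
        ((X:Polynomial K)^(n+2), (X:Polynomial K)^0, (X:Polynomial K)^(n+2)) ::ₘ
        ((X:Polynomial K)^(n+2), (X:Polynomial K)^1, (X:Polynomial K)^(n+3)) ::ₘ
        ((X:Polynomial K)^(n+1), (X:Polynomial K)^0, (X:Polynomial K)^(n+1)) ::ₘ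
        ((X:Polynomial K)^(n+1), (X:Polynomial K)^1, (X:Polynomial K)^(n+2)) ::ₘ
        stdRep K n 1 := by
      rw [show n+2 = n+1+1 from rfl, stdRep_succ K (n+1), stdRep_succ K n, e1, e2]
    have hblock := block K (X^(n+1)) (X^(n+2)) (X^0) (X^1) (X^(n+1)) (X^(n+2)) (X^(n+3))
      (stdRep K n 1)
    rw [← hsplit] at hblock
    set t1 : Triple K := (X^(n+1)+X^(n+2), X^1+X^0, X^(n+2)) with ht1
    set t2 : Triple K := ((X:Polynomial K)^(n+2), X^1, X^(n+3) + (-1:K)•X^(n+2)) with ht2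
    set t3 : Triple K := ((X:Polynomial K)^(n+1), X^0, X^(n+1) + (-1:K)•X^(n+2)) with ht3
    have hp2 : Path K (t1 ::ₘ t2 ::ₘ t3 ::ₘ stdRep K n 1)
        (R + (t1 ::ₘ t2 ::ₘ t3 ::ₘ 0)) f r := by
      have e : t1 ::ₘ t2 ::ₘ t3 ::ₘ stdRep K n 1 =
          stdRep K n 1 + (t1 ::ₘ t2 ::ₘ t3 ::ₘ 0) := by
        rw [add_comm]
        simp [Multiset.cons_add]
      rw [e]
      exact hp.addRight K _
    refine ⟨R + (t1 ::ₘ t2 ::ₘ t3 ::ₘ 0), 3 + f, 1 + r,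
      Path.trans K hblock hp2, ?_⟩
    simp only [Multiset.card_add, hc]
    simp only [Multiset.card_cons, Multiset.card_zero]
    omega

end FlipGraph

/-- Let `K` be an arbitrary field and `n ≥ 1`.  In the flip graph of the
polynomial multiplication tensor `T_{n,1}` there is a path (consisting of flips and
reductions) from the standard representation to a representation of length `⌈(3/2)(n+1)⌉`. -/
theorem path_to_short_rep_deg_one (K : Type) [Field K] (n : ℕ) (hn : 1 ≤ n) :
    ∃ (R : Multiset (Triple K)) (f r : ℕ),
      Path K (stdRep K n 1) R f r ∧ Multiset.card R = (3 * (n + 1) + 1) / 2 :=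
  FlipGraph.aux K n
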